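/- Let d be a dissimilarity on a nonempty finite set X. Then there exists a Robinsonian dissimilarity d_R on X such that ‖d − d_R‖∞ ≤ ‖d − d'‖∞ for every Robinsonian dissimilarity d' on X; moreover, this minimum value ‖d − d_R‖∞ equals ½|d(x,y) − d(x',y')| for some elements x,y,x',y' ∈ X. -/

import Mathlib

open Finset

variable {X : Type*}

/-- A dissimilarity on `X`: symmetric, nonnegative, zero on the diagonal. -/
def IsDissimilarity (d : X → X → ℝ) : Prop :=
  (∀ x y, d x y = d y x) ∧ (∀ x y, 0 ≤ d x y) ∧ (∀ x, d x x = 0)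

/-- Here `le` stands for the reflexive closure `⪯` of a linear order `≺` on `X`.
`EpsCompatible d le ε` says that the order is `ε`-compatible with `d`, i.e.
`d u v ≤ d x y + 2ε` whenever `x ⪯ u ⪯ v ⪯ y`. -/
def EpsCompatible (d : X → X → ℝ) (le : X → X → Prop) (ε : ℝ) : Prop :=
  ∀ x u v y, le x u → le u v → le v y → d u v ≤ d x y + 2 * ε

/-- The `l∞`-distance `‖d - d'‖∞ = max_{x,y} |d x y - d' x y|`. -/
noncomputable def linfDist [Fintype X] [Nonempty X] (d d' : X → X → ℝ) : ℝ :=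
  (Finset.univ : Finset (X × X)).sup' Finset.univ_nonempty
    fun p => |d p.1 p.2 - d' p.1 p.2|

/-- A dissimilarity is Robinsonian if it admits a compatible linear order. -/
def IsRobinsonian (d : X → X → ℝ) : Prop :=
  ∃ le : X → X → Prop, IsLinearOrder X le ∧ EpsCompatible d le 0

section Aux

variable [Fintype X]

attribute [local instance] Classical.propDecidable

open Classical in
/-- max of `d u v` over pairs `x ⪯ u ⪯ v ⪯ y` (with `(x,y)` inserted for nonemptiness). -/
noncomputable def intSup (d : X → X → ℝ) (le : X → X → Prop) (x y : X) : ℝ :=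
  (insert (x, y) ((Finset.univ : Finset (X × X)).filter
      fun p => le x p.1 ∧ le p.1 p.2 ∧ le p.2 y)).sup'
    (Finset.insert_nonempty _ _) fun p => d p.1 p.2

theorem d_le_intSup (d : X → X → ℝ) (le : X → X → Prop) (x y : X) :
    d x y ≤ intSup d le x y := by
  unfold intSup
  have := Finset.le_sup' (fun p : X × X => d p.1 p.2)
    (Finset.mem_insert_self (x, y) ((Finset.univ : Finset (X × X)).filter
      fun p => le x p.1 ∧ le p.1 p.2 ∧ le p.2 y))
  exact this

theorem intSup_le (d : X → X → ℝ) (le : X → X → Prop) {ε : ℝ} (hε : 0 ≤ ε)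
    (hcomp : EpsCompatible d le ε) {x y : X} (hxy : le x y) :
    intSup d le x y ≤ d x y + 2 * ε := by
  unfold intSup
  apply Finset.sup'_le
  intro p hp
  rcases Finset.mem_insert.mp hp with h | h
  · subst h; simp; linarith
  · obtain ⟨h1, h2, h3⟩ := (Finset.mem_filter.mp h).2
    exact hcomp x p.1 p.2 y h1 h2 h3

theorem intSup_mono (d : X → X → ℝ) {le : X → X → Prop} (hle : IsLinearOrder X le)
    {x u v y : X} (h1 : le x u) (h2 : le u v) (h3 : le v y) :
    intSup d le u v ≤ intSup d le x y := by
  haveI := hle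
  unfold intSup
  apply Finset.sup'_le
  intro p hp
  apply Finset.le_sup' (fun p : X × X => d p.1 p.2)
  rcases Finset.mem_insert.mp hp with h | h
  · subst h
    exact Finset.mem_insert_of_mem (Finset.mem_filter.mpr ⟨Finset.mem_univ _, h1, h2, h3⟩)
  · obtain ⟨ha, hb, hc⟩ := (Finset.mem_filter.mp h).2
    exact Finset.mem_insert_of_mem (Finset.mem_filter.mpr ⟨Finset.mem_univ _,
      trans_of le h1 ha, hb, trans_of le hc h3⟩)

theorem intSup_self (d : X → X → ℝ) {le : X → X → Prop} (hle : IsLinearOrder X le)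
    (hdiag : ∀ x, d x x = 0) (x : X) : intSup d le x x = 0 := by
  haveI := hle
  apply le_antisymm
  · unfold intSup
    apply Finset.sup'_le
    intro p hp
    rcases Finset.mem_insert.mp hp with h | h
    · subst h; simp [hdiag]
    · obtain ⟨ha, hb, hc⟩ := (Finset.mem_filter.mp h).2
      have h1 : p.1 = x := antisymm_of le (trans_of le hb hc) ha
      have h2 : p.2 = x := antisymm_of le hc (trans_of le ha hb)
      rw [h1, h2, hdiag]
  · rw [← hdiag x]
    exact d_le_intSup d le x x

open Classical in
/-- half of the max violation of the Robinson condition for the order `le`. -/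
noncomputable def orderEps [Nonempty X] (d : X → X → ℝ) (le : X → X → Prop) : ℝ :=
  (insert ((Classical.arbitrary X, Classical.arbitrary X),
           (Classical.arbitrary X, Classical.arbitrary X))
      ((Finset.univ : Finset ((X × X) × X × X)).filter fun q =>
        le q.1.1 q.2.1 ∧ le q.2.1 q.2.2 ∧ le q.2.2 q.1.2)).sup'
    (Finset.insert_nonempty _ _) fun q => (d q.2.1 q.2.2 - d q.1.1 q.1.2) / 2

theorem orderEps_nonneg [Nonempty X] (d : X → X → ℝ) (le : X → X → Prop) :
    0 ≤ orderEps d le := by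
  have h : (d (Classical.arbitrary X) (Classical.arbitrary X)
      - d (Classical.arbitrary X) (Classical.arbitrary X)) / 2 ≤ orderEps d le := by
    unfold orderEps
    have := Finset.le_sup'
      (fun q : (X × X) × X × X => (d q.2.1 q.2.2 - d q.1.1 q.1.2) / 2)
      (Finset.mem_insert_self ((Classical.arbitrary X, Classical.arbitrary X),
          (Classical.arbitrary X, Classical.arbitrary X))
        ((Finset.univ : Finset ((X × X) × X × X)).filter fun q =>
          le q.1.1 q.2.1 ∧ le q.2.1 q.2.2 ∧ le q.2.2 q.1.2))
    exact this
  simpa using h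

theorem epsCompatible_orderEps [Nonempty X] (d : X → X → ℝ) (le : X → X → Prop) :
    EpsCompatible d le (orderEps d le) := by
  intro x u v y h1 h2 h3
  have h : (d u v - d x y) / 2 ≤ orderEps d le := by
    unfold orderEps
    exact Finset.le_sup'
      (fun q : (X × X) × X × X => (d q.2.1 q.2.2 - d q.1.1 q.1.2) / 2)
      (Finset.mem_insert_of_mem (Finset.mem_filter.mpr
        ⟨Finset.mem_univ (((x, y), (u, v)) : (X × X) × X × X), h1, h2, h3⟩))
  linarith

theorem orderEps_le [Nonempty X] (d : X → X → ℝ) (le : X → X → Prop) {η : ℝ}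
    (hη : 0 ≤ η) (hcomp : EpsCompatible d le η) : orderEps d le ≤ η := by
  unfold orderEps
  apply Finset.sup'_le
  intro q hq
  rcases Finset.mem_insert.mp hq with h | h
  · subst h; simp [hη]
  · obtain ⟨h1, h2, h3⟩ := (Finset.mem_filter.mp h).2
    have := hcomp q.1.1 q.2.1 q.2.2 q.1.2 h1 h2 h3
    linarith

theorem orderEps_eq [Nonempty X] (d : X → X → ℝ) (le : X → X → Prop) :
    ∃ q : (X × X) × X × X, orderEps d le = (d q.2.1 q.2.2 - d q.1.1 q.1.2) / 2 := by
  unfold orderEps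
  obtain ⟨q, _, hq⟩ := Finset.exists_mem_eq_sup'
    (Finset.insert_nonempty ((Classical.arbitrary X, Classical.arbitrary X),
        (Classical.arbitrary X, Classical.arbitrary X))
      ((Finset.univ : Finset ((X × X) × X × X)).filter fun q =>
        le q.1.1 q.2.1 ∧ le q.2.1 q.2.2 ∧ le q.2.2 q.1.2))
    (fun q : (X × X) × X × X => (d q.2.1 q.2.2 - d q.1.1 q.1.2) / 2)
  exact ⟨q, hq⟩

end Aux

theorem exists_closest_robinsonian [Fintype X] [Nonempty X]
    (d : X → X → ℝ) (hd : IsDissimilarity d) :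
    ∃ dR : X → X → ℝ, IsDissimilarity dR ∧ IsRobinsonian dR ∧
      (∀ d' : X → X → ℝ, IsDissimilarity d' → IsRobinsonian d' →
        linfDist d dR ≤ linfDist d d') ∧
      ∃ x y x' y' : X, linfDist d dR = |d x y - d x' y'| / 2 := by
  classical
  obtain ⟨hsymm, hnonneg, hdiag⟩ := hd
  -- a linear order on X exists
  have hex : ∃ le : X → X → Prop, IsLinearOrder X le := by
    letI : LinearOrder X :=
      LinearOrder.lift' (Fintype.equivFin X) (Fintype.equivFin X).injective
    exact ⟨(· ≤ ·), inferInstance⟩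
  -- candidate values
  set T : Finset ℝ :=
    Finset.image (fun q : (X × X) × X × X => (d q.2.1 q.2.2 - d q.1.1 q.1.2) / 2)
      Finset.univ with hTdef
  set T' : Finset ℝ := T.filter
    (fun t => 0 ≤ t ∧ ∃ le : X → X → Prop, IsLinearOrder X le ∧ EpsCompatible d le t)
    with hT'def
  have hmemT : ∀ le : X → X → Prop, orderEps d le ∈ T := by
    intro le
    obtain ⟨q, hq⟩ := orderEps_eq d le
    rw [hTdef, hq]
    exact Finset.mem_image_of_mem _ (Finset.mem_univ q)
  have hmemT' : ∀ le : X → X → Prop, IsLinearOrder X le → orderEps d le ∈ T' := by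
    intro le hle
    exact Finset.mem_filter.mpr ⟨hmemT le, orderEps_nonneg d le,
      le, hle, epsCompatible_orderEps d le⟩
  have hT'ne : T'.Nonempty := by
    obtain ⟨le₀, hle₀⟩ := hex
    exact ⟨orderEps d le₀, hmemT' le₀ hle₀⟩
  set ε : ℝ := T'.min' hT'ne with hεdef
  have hεmem := T'.min'_mem hT'ne
  obtain ⟨hεT, hεnn, le, hle, hcomp⟩ := Finset.mem_filter.mp hεmem
  haveI := hle
  -- the approximating dissimilarity
  set dR : X → X → ℝ := fun x y =>
    max 0 ((if le x y then intSup d le x y else intSup d le y x) - ε) with hdRdef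
  have hdRle : ∀ x y, le x y → dR x y = max 0 (intSup d le x y - ε) := by
    intro x y h
    simp only [hdRdef, if_pos h]
  -- symmetry
  have hdRsymm : ∀ x y, dR x y = dR y x := by
    intro x y
    by_cases h : le x y <;> by_cases h' : le y x
    · have : x = y := antisymm_of le h h'
      subst this; rfl
    · simp only [hdRdef, if_pos h, if_neg h']
    · simp only [hdRdef, if_neg h, if_pos h']
    · exact absurd (total_of le x y) (by simp [h, h'])
  -- nonnegativity and diagonal
  have hdRnonneg : ∀ x y, 0 ≤ dR x y := fun x y => le_max_left _ _
  have hdRdiag : ∀ x, dR x x = 0 := by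
    intro x
    rw [hdRle x x (refl_of le x), intSup_self d hle hdiag x]
    simp [hεdef, hεnn]
  -- Robinsonian
  have hrob : EpsCompatible dR le 0 := by
    intro x u v y h1 h2 h3
    have hxy : le x y := trans_of le (trans_of le h1 h2) h3
    rw [hdRle u v h2, hdRle x y hxy]
    have := intSup_mono d hle h1 h2 h3
    have : max 0 (intSup d le u v - ε) ≤ max 0 (intSup d le x y - ε) :=
      max_le_max le_rfl (by linarith)
    linarith
  -- pointwise approximation bound
  have habs : ∀ x y, le x y → |d x y - dR x y| ≤ ε := by
    intro x y hxy
    have h1 : d x y ≤ intSup d le x y := d_le_intSup d le x y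
    have h2 : intSup d le x y ≤ d x y + 2 * ε := intSup_le d le hεnn hcomp hxy
    rw [hdRle x y hxy]
    have h3 : intSup d le x y - ε ≤ max 0 (intSup d le x y - ε) := le_max_right _ _
    have h4 : max 0 (intSup d le x y - ε) ≤ d x y + ε :=
      max_le (by linarith [hnonneg x y]) (by linarith)
    rw [abs_le]
    constructor <;> linarith
  have hpt : ∀ x y, |d x y - dR x y| ≤ ε := by
    intro x y
    rcases total_of le x y with h | h
    · exact habs x y h
    · rw [hsymm x y, hdRsymm x y]
      exact habs y x h
  have hlinf_le : linfDist d dR ≤ ε := by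
    unfold linfDist
    exact Finset.sup'_le _ _ fun p _ => hpt p.1 p.2
  -- lower bound for every Robinsonian dissimilarity
  have hlb : ∀ d' : X → X → ℝ, IsRobinsonian d' → ε ≤ linfDist d d' := by
    intro d' hr'
    obtain ⟨le', hle', hcomp'⟩ := hr'
    have hηpt : ∀ x y, |d x y - d' x y| ≤ linfDist d d' := by
      intro x y
      exact Finset.le_sup' (fun p : X × X => |d p.1 p.2 - d' p.1 p.2|)
        (Finset.mem_univ (x, y))
    have hηnn : 0 ≤ linfDist d d' :=
      le_trans (abs_nonneg _) (hηpt (Classical.arbitrary X) (Classical.arbitrary X))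
    have hc : EpsCompatible d le' (linfDist d d') := by
      intro x u v y h1 h2 h3
      have hA := hηpt u v
      have hB := hηpt x y
      have hC := hcomp' x u v y h1 h2 h3
      rw [abs_le] at hA hB
      have := hA.2
      have := hB.1
      linarith [hC]
    calc ε ≤ orderEps d le' := Finset.min'_le _ _ (hmemT' le' hle')
      _ ≤ linfDist d d' := orderEps_le d le' hηnn hc
  -- assemble
  refine ⟨dR, ⟨hdRsymm, hdRnonneg, hdRdiag⟩, ⟨le, hle, hrob⟩,
    fun d' _ h2 => le_trans hlinf_le (hlb d' h2), ?_⟩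
  have heq : linfDist d dR = ε :=
    le_antisymm hlinf_le (hlb dR ⟨le, hle, hrob⟩)
  obtain ⟨q, _, hq⟩ := Finset.mem_image.mp hεT
  refine ⟨q.2.1, q.2.2, q.1.1, q.1.2, ?_⟩
  rw [heq, hεdef, ← hq]
  rw [abs_of_nonneg (by linarith : (0:ℝ) ≤ d q.2.1 q.2.2 - d q.1.1 q.1.2)]
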